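/- Let r ≥ 3, e ≥ 3, k ≥ 2 with r > k. Suppose F is an r-uniform hypergraph on [n] that is G_r(er-(e-1)k, e)-free and in which every (k-1)-subset of [n] has codegree either 0 or at least e. Then F is G_r((e-1)r-(e-2)k-1, e-1)-free; that is, any e-1 distinct edges of F have union of size at least (e-1)r-(e-2)k. -/

import Mathlib

open Finset

/-- `F` is an `r`-uniform hypergraph: every edge has `r` vertices. -/
def UniformH {n : ℕ} (r : ℕ) (F : Finset (Finset (Fin n))) : Prop :=
  ∀ A ∈ F, A.card = r

/-- `F` is `G_r(v,e)`-free: any `e` distinct edges have union of size at least `v+1`. -/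
def IsGFree {n : ℕ} (v e : ℕ) (F : Finset (Finset (Fin n))) : Prop :=
  ∀ S ⊆ F, S.card = e → v + 1 ≤ (S.biUnion id).card

/-- `f_r(n,v,e)`: the maximum number of edges of an `n`-vertex `G_r(v,e)`-free
`r`-uniform hypergraph. -/
noncomputable def extremalF (r n v e : ℕ) : ℕ :=
  sSup {m | ∃ F : Finset (Finset (Fin n)), UniformH r F ∧ IsGFree v e F ∧ F.card = m}

theorem stmt_3 (n r e k : ℕ) (hr : 3 ≤ r) (he : 3 ≤ e) (hk : 2 ≤ k) (hrk : k < r)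
    (F : Finset (Finset (Fin n))) (hF : UniformH r F)
    (hfree : IsGFree (e * r - (e - 1) * k) e F)
    (hdeg : ∀ T : Finset (Fin n), T.card = k - 1 →
      (F.filter (fun A => T ⊆ A)).card = 0 ∨ e ≤ (F.filter (fun A => T ⊆ A)).card) :
    IsGFree ((e - 1) * r - (e - 2) * k - 1) (e - 1) F := by
  intro S hS hScard
  by_contra hlt
  push_neg at hlt
  -- S is nonempty
  have hSne : S.Nonempty := by
    rw [← Finset.card_pos, hScard]; omega
  obtain ⟨A₀, hA₀⟩ := hSne
  have hA₀F : A₀ ∈ F := hS hA₀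
  have hA₀card : A₀.card = r := hF A₀ hA₀F
  -- choose a (k-1)-subset T of A₀
  obtain ⟨T, hTA₀, hTcard⟩ := Finset.exists_subset_card_eq (show k - 1 ≤ A₀.card by omega)
  -- codegree of T is at least e
  have hTdeg : e ≤ (F.filter (fun A => T ⊆ A)).card := by
    rcases hdeg T hTcard with h0 | h1
    · exfalso
      have : A₀ ∈ F.filter (fun A => T ⊆ A) := Finset.mem_filter.2 ⟨hA₀F, hTA₀⟩
      have := Finset.card_pos.2 ⟨A₀, this⟩
      omega
    · exact h1
  -- find an edge A containing T that is not in S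
  have hex : ∃ A ∈ F.filter (fun A => T ⊆ A), A ∉ S := by
    by_contra hall
    push_neg at hall
    have hsub : F.filter (fun A => T ⊆ A) ⊆ S := fun A hA => hall A hA
    have := Finset.card_le_card hsub
    omega
  obtain ⟨A, hAfilt, hAS⟩ := hex
  obtain ⟨hAF, hTA⟩ := Finset.mem_filter.1 hAfilt
  have hAcard : A.card = r := hF A hAF
  -- apply freeness to insert A S
  have hS' : insert A S ⊆ F := Finset.insert_subset hAF hS
  have hScard' : (insert A S).card = e := by
    rw [Finset.card_insert_of_notMem hAS, hScard]; omega
  have hfr := hfree (insert A S) hS' hScard'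
  rw [Finset.biUnion_insert] at hfr
  -- bound the union size
  have hTU : T ⊆ S.biUnion id :=
    hTA₀.trans (Finset.subset_biUnion_of_mem id hA₀)
  have hsub2 : (id A : Finset (Fin n)) ∪ S.biUnion id ⊆ (A \ T) ∪ S.biUnion id := by
    intro x hx
    rcases Finset.mem_union.1 hx with hx | hx
    · by_cases hxT : x ∈ T
      · exact Finset.mem_union.2 (Or.inr (hTU hxT))
      · exact Finset.mem_union.2 (Or.inl (Finset.mem_sdiff.2 ⟨hx, hxT⟩))
    · exact Finset.mem_union.2 (Or.inr hx)
  have hcard1 : ((id A : Finset (Fin n)) ∪ S.biUnion id).card ≤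
      (A \ T).card + (S.biUnion id).card :=
    (Finset.card_le_card hsub2).trans (Finset.card_union_le _ _)
  have hsdiff : (A \ T).card = r - (k - 1) := by
    rw [Finset.card_sdiff_of_subset hTA, hAcard, hTcard]
  -- arithmetic
  have h1 : (e - 1) * r = e * r - r := Nat.sub_one_mul e r
  have h2 : (e - 2) * k = e * k - 2 * k := Nat.sub_mul e 2 k
  have h3 : (e - 1) * k = e * k - k := Nat.sub_one_mul e k
  have h4 : 3 * r ≤ e * r := Nat.mul_le_mul_right r he
  have h5 : 3 * k ≤ e * k := Nat.mul_le_mul_right k he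
  have h6 : e * r = e * k + e * (r - k) := by
    rw [← Nat.mul_add, Nat.add_sub_cancel' hrk.le]
  have h7 : 3 * (r - k) ≤ e * (r - k) := Nat.mul_le_mul_right (r - k) he
  omega
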